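/- For every k with 0 ≤ k ≤ n, the polynomial f_k = ∏_{u ∈ V_k} (X - C u) in one variable X over MvPolynomial (Fin n) (ZMod p) is monic of degree p^k, and for every natural number d that is not of the form p^i with 0 ≤ i ≤ k, the coefficient of X^d in f_k is zero; consequently f_k = ∑_{i=0}^{k} (-1)^{k-i} (C d_{k,i}) X^{p^i} with d_{k,k} = 1. -/

import Mathlib

open MvPolynomial

/-- `V p n k` : the set of `𝔽_p`-linear combinations of the first `k` variables. -/
noncomputable def V (p n k : ℕ) [Fact p.Prime] : Finset (MvPolynomial (Fin n) (ZMod p)) :=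
  (Finset.univ : Finset (Fin n → ZMod p)).image
    (fun c => ∑ j ∈ Finset.univ.filter (fun j : Fin n => j.val < k), C (c j) * X j)

/-- `f p n k = ∏_{u ∈ V_k} (X - C u)`. -/
noncomputable def f (p n k : ℕ) [Fact p.Prime] :
    Polynomial (MvPolynomial (Fin n) (ZMod p)) :=
  ∏ u ∈ V p n k, (Polynomial.X - Polynomial.C u)

/-- Dickson invariant `d_{k,i}`. -/
noncomputable def d (p n k i : ℕ) [Fact p.Prime] : MvPolynomial (Fin n) (ZMod p) :=
  (-1) ^ (k - i) * (f p n k).coeff (p ^ i)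


section Aux
variable (p n : ℕ) [hp : Fact p.Prime]

lemma coeff_zero_of_mem_V {k : ℕ} {u : MvPolynomial (Fin n) (ZMod p)} (hu : u ∈ V p n k)
    {j : Fin n} (hj : k ≤ j.val) : MvPolynomial.coeff (Finsupp.single j 1) u = 0 := by
  classical
  simp only [V, Finset.mem_image] at hu
  obtain ⟨c, -, rfl⟩ := hu
  rw [MvPolynomial.coeff_sum]
  refine Finset.sum_eq_zero fun i hi => ?_
  rw [MvPolynomial.coeff_C_mul, MvPolynomial.coeff_X', if_neg, mul_zero]
  intro h
  have : i = j := Finsupp.single_left_injective one_ne_zero h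
  subst this
  simp only [Finset.mem_filter] at hi
  omega

lemma V_zero : V p n 0 = {0} := by
  classical
  ext u
  simp [V, eq_comm]

lemma V_succ {k : ℕ} (hk : k < n) :
    V p n (k+1) = ((Finset.univ : Finset (ZMod p)) ×ˢ V p n k).image
      (fun q => C q.1 * X (⟨k, hk⟩ : Fin n) + q.2) := by
  classical
  have hfil : (Finset.univ.filter (fun j : Fin n => j.val < k+1))
      = insert (⟨k, hk⟩ : Fin n) (Finset.univ.filter (fun j : Fin n => j.val < k)) := by
    ext j
    simp [Nat.lt_succ_iff_lt_or_eq, Fin.ext_iff, or_comm]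
    constructor <;> intro h <;> omega
  ext u
  simp only [V, Finset.mem_image, Finset.mem_product, Finset.mem_univ, true_and,
    Prod.exists]
  constructor
  · rintro ⟨c, -, rfl⟩
    refine ⟨c ⟨k, hk⟩, ∑ j ∈ Finset.univ.filter (fun j : Fin n => j.val < k), C (c j) * X j,
      ⟨c, rfl⟩, ?_⟩
    rw [hfil, Finset.sum_insert (by simp)]
  · rintro ⟨a, v, ⟨c, rfl⟩, rfl⟩
    refine ⟨Function.update c ⟨k, hk⟩ a, ?_⟩
    rw [hfil, Finset.sum_insert (by simp), Function.update_self]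
    congr 1
    refine Finset.sum_congr rfl fun j hj => ?_
    simp only [Finset.mem_filter] at hj
    rw [Function.update_of_ne]
    intro h
    subst h
    simp at hj

lemma V_succ_injOn {k : ℕ} (hk : k < n) :
    Set.InjOn (fun q : ZMod p × MvPolynomial (Fin n) (ZMod p) =>
        C q.1 * X (⟨k, hk⟩ : Fin n) + q.2)
      (((Finset.univ : Finset (ZMod p)) ×ˢ V p n k) : Finset _) := by
  classical
  rintro ⟨a, u⟩ h1 ⟨b, v⟩ h2 h
  simp only [Finset.coe_product, Set.mem_prod, Finset.mem_coe] at h1 h2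
  simp only at h
  have hu := coeff_zero_of_mem_V p n h1.2 (j := ⟨k, hk⟩) (le_refl k)
  have hv := coeff_zero_of_mem_V p n h2.2 (j := ⟨k, hk⟩) (le_refl k)
  have hab : a = b := by
    have := congrArg (MvPolynomial.coeff (Finsupp.single (⟨k, hk⟩ : Fin n) 1)) h
    simpa [MvPolynomial.coeff_add, MvPolynomial.coeff_C_mul, hu, hv] using this
  subst hab
  have huv : u = v := by
    have := h
    rwa [add_right_inj] at this
  rw [huv]

lemma card_V : ∀ {k : ℕ}, k ≤ n → (V p n k).card = p ^ k := by
  intro k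
  induction k with
  | zero => intro _; simp [V_zero]
  | succ k ih =>
    intro hk
    have hk' : k < n := by omega
    rw [V_succ p n hk', Finset.card_image_of_injOn (V_succ_injOn p n hk'),
      Finset.card_product, Finset.card_univ, ZMod.card, ih (by omega), pow_succ]
    ring
end Aux

section B
variable (p n : ℕ) [hp : Fact p.Prime]
variable {R : Type*} [CommRing R]

lemma monic_aux [Nontrivial R] (s : Finset R) : (∏ u ∈ s, (Polynomial.X - Polynomial.C u)).Monic :=
  Polynomial.monic_prod_of_monic _ _ fun u _ => Polynomial.monic_X_sub_C u

lemma natDegree_aux [Nontrivial R] (s : Finset R) :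
    (∏ u ∈ s, (Polynomial.X - Polynomial.C u)).natDegree = s.card := by
  rw [Polynomial.natDegree_prod_of_monic _ _ fun u _ => Polynomial.monic_X_sub_C u]
  simp [Polynomial.natDegree_X_sub_C]

lemma rep_lemma (g : Polynomial R) (k : ℕ) (hp1 : 1 < p)
    (hcf : ∀ m : ℕ, (∀ i, i ≤ k → m ≠ p ^ i) → g.coeff m = 0) :
    g = ∑ i ∈ Finset.range (k+1), Polynomial.C (g.coeff (p ^ i)) * Polynomial.X ^ (p ^ i) := by
  ext m
  rw [Polynomial.finset_sum_coeff]
  simp only [Polynomial.coeff_C_mul, Polynomial.coeff_X_pow]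
  by_cases hm : ∃ i, i ≤ k ∧ m = p ^ i
  · obtain ⟨i, hik, rfl⟩ := hm
    rw [Finset.sum_eq_single i]
    · simp
    · intro j hj hne
      rw [if_neg, mul_zero]
      intro h
      exact hne (Nat.pow_right_injective hp1 h.symm)
    · intro h
      exact absurd (Finset.mem_range.2 (by omega)) h
  · push_neg at hm
    rw [hcf m hm]
    refine (Finset.sum_eq_zero fun j hj => ?_).symm
    rw [if_neg, mul_zero]
    exact hm j (by simpa [Nat.lt_succ_iff] using hj)

lemma coeff_comp_C_mul_X (g : Polynomial R) (e : R) (i : ℕ) :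
    (g.comp (Polynomial.C e * Polynomial.X)).coeff i = g.coeff i * e ^ i := by
  induction g using Polynomial.induction_on' with
  | add f g hf hg => simp [Polynomial.add_comp, hf, hg, add_mul]
  | monomial m a =>
    rw [← Polynomial.C_mul_X_pow_eq_monomial]
    simp only [Polynomial.mul_comp, Polynomial.C_comp, Polynomial.pow_comp, Polynomial.X_comp,
      mul_pow, ← Polynomial.C_pow, Polynomial.coeff_C_mul, ← mul_assoc, ← Polynomial.C_mul,
      Polynomial.coeff_C_mul, Polynomial.coeff_X_pow]
    by_cases h : i = m
    · subst h; simp [mul_comm]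
    · simp [h]

lemma prod_X_sub_C_zmod :
    ∏ a : ZMod p, (Polynomial.X - Polynomial.C a) = Polynomial.X ^ p - Polynomial.X := by
  classical
  have hp2 : 1 < p := hp.out.one_lt
  have hmono : (Polynomial.X ^ p - Polynomial.X : Polynomial (ZMod p)).Monic := by
    have h1 : (Polynomial.X : Polynomial (ZMod p)).degree < (p : ℕ) := by
      rw [Polynomial.degree_X]
      exact_mod_cast hp2
    exact Polynomial.monic_X_pow_sub h1
  have hroots := FiniteField.roots_X_pow_card_sub_X (ZMod p)
  rw [ZMod.card] at hroots
  have hdeg := FiniteField.X_pow_card_sub_X_natDegree_eq (ZMod p) hp2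
  have key := Polynomial.prod_multiset_X_sub_C_of_monic_of_roots_card_eq hmono
    (by rw [hroots, hdeg]; simp [ZMod.card])
  rw [hroots] at key
  rw [Finset.prod_eq_multiset_prod]
  exact key
end B


section C
variable {R : Type*} [CommRing R] [IsDomain R] (p : ℕ) [hp : Fact p.Prime]
  [Algebra (ZMod p) R]


lemma prod_X_sub_C_alg :
    ∏ a : ZMod p, (Polynomial.X - Polynomial.C (algebraMap (ZMod p) R a))
      = Polynomial.X ^ p - Polynomial.X := by
  have h := congrArg (Polynomial.mapRingHom (algebraMap (ZMod p) R)) (prod_X_sub_C_zmod p)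
  simpa using h

lemma H_eq (e : R) (he : e ≠ 0) :
    ∏ a : ZMod p, (Polynomial.X - Polynomial.C (algebraMap (ZMod p) R a * e))
      = Polynomial.X ^ p - Polynomial.C (e ^ (p - 1)) * Polynomial.X := by
  classical
  have hp2 : 1 < p := hp.out.one_lt
  set H : Polynomial R := ∏ a : ZMod p, (Polynomial.X - Polynomial.C (algebraMap (ZMod p) R a * e)) with hH
  have hmono : H.Monic := Polynomial.monic_prod_of_monic _ _ fun a _ => Polynomial.monic_X_sub_C _
  have hdeg : H.natDegree = p := by
    rw [hH, Polynomial.natDegree_prod_of_monic _ _ fun a _ => Polynomial.monic_X_sub_C _]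
    simp only [Polynomial.natDegree_X_sub_C, Finset.sum_const, Finset.card_univ, ZMod.card,
      smul_eq_mul, mul_one]
  have hcomp : H.comp (Polynomial.C e * Polynomial.X)
      = Polynomial.C (e ^ p) * (Polynomial.X ^ p - Polynomial.X) := by
    rw [hH, Polynomial.prod_comp]
    have h1 : ∀ a : ZMod p,
        (Polynomial.X - Polynomial.C (algebraMap (ZMod p) R a * e)).comp
          (Polynomial.C e * Polynomial.X)
        = Polynomial.C e * (Polynomial.X - Polynomial.C (algebraMap (ZMod p) R a)) := by
      intro a
      rw [Polynomial.sub_comp, Polynomial.X_comp, Polynomial.C_comp, Polynomial.C_mul]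
      ring
    rw [Finset.prod_congr rfl fun a _ => h1 a, Finset.prod_mul_distrib, Finset.prod_const,
      Finset.card_univ, ZMod.card, prod_X_sub_C_alg, ← Polynomial.C_pow]
  have hco : ∀ i : ℕ, H.coeff i * e ^ i
      = (Polynomial.C (e ^ p) * (Polynomial.X ^ p - Polynomial.X)).coeff i := by
    intro i
    rw [← coeff_comp_C_mul_X, hcomp]
  have hp1 : ¬ ((1:ℕ) = p) := by omega
  ext i
  by_cases hip : i = p
  · subst hip
    rw [Polynomial.coeff_sub, Polynomial.coeff_X_pow, if_pos rfl, Polynomial.coeff_C_mul,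
      Polynomial.coeff_X, if_neg hp1, mul_zero, sub_zero]
    have h1 := hmono.coeff_natDegree
    rwa [hdeg] at h1
  · by_cases hi1 : i = 1
    · subst hi1
      have h := hco 1
      rw [Polynomial.coeff_C_mul, Polynomial.coeff_sub, Polynomial.coeff_X_pow,
        Polynomial.coeff_X_one, if_neg hip, pow_one] at h
      have h2 : H.coeff 1 * e = -(e ^ (p-1)) * e := by
        rw [h]
        have h4 : e ^ p = e ^ (p - 1) * e := by
          rw [← pow_succ]
          congr 1
          omega
        rw [h4]; ring
      have h3 := mul_right_cancel₀ he h2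
      rw [h3, Polynomial.coeff_sub, Polynomial.coeff_X_pow, if_neg hip,
        Polynomial.coeff_C_mul, Polynomial.coeff_X_one]
      ring
    · have h := hco i
      rw [Polynomial.coeff_C_mul, Polynomial.coeff_sub, Polynomial.coeff_X_pow,
        Polynomial.coeff_X, if_neg hip, if_neg (fun hh => hi1 hh.symm)] at h
      simp only [sub_zero, mul_zero, sub_self] at h
      have h3 : H.coeff i = 0 := (mul_eq_zero.mp h).resolve_right (pow_ne_zero i he)
      rw [h3, Polynomial.coeff_sub, Polynomial.coeff_X_pow, if_neg hip,
        Polynomial.coeff_C_mul, Polynomial.coeff_X, if_neg (fun hh => hi1 hh.symm)]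
      ring
end C


section Main
variable (p n : ℕ) [hp : Fact p.Prime]

lemma monic_f (k : ℕ) : (f p n k).Monic := monic_aux _
lemma natDegree_f {k : ℕ} (hk : k ≤ n) : (f p n k).natDegree = p ^ k := by
  rw [f, natDegree_aux, card_V p n hk]

lemma e_ne_zero {k : ℕ} (hk' : k < n) :
    (f p n k).eval (X (⟨k, hk'⟩ : Fin n)) ≠ 0 := by
  rw [f, Polynomial.eval_prod]
  rw [Finset.prod_ne_zero_iff]
  intro u hu
  simp only [Polynomial.eval_sub, Polynomial.eval_X, Polynomial.eval_C]
  intro hcon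
  have h0 := coeff_zero_of_mem_V p n hu (j := ⟨k, hk'⟩) (le_refl k)
  have := congrArg (MvPolynomial.coeff (Finsupp.single (⟨k, hk'⟩ : Fin n) 1)) (sub_eq_zero.mp hcon)
  rw [MvPolynomial.coeff_X, h0, if_pos rfl] at this
  exact one_ne_zero this

lemma eval_aux {R : Type*} [CommRing R] (c : ℕ → R) (k : ℕ) (w : R) :
    (∑ i ∈ Finset.range (k+1), Polynomial.C (c i) * Polynomial.X ^ (p ^ i)).eval w
      = ∑ i ∈ Finset.range (k+1), c i * w ^ (p ^ i) := by
  rw [Polynomial.eval_finset_sum]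
  simp

lemma comp_aux {R : Type*} [CommRing R] [CharP R p] (c : ℕ → R) (k : ℕ) (w : R) :
    (∑ i ∈ Finset.range (k+1), Polynomial.C (c i) * Polynomial.X ^ (p ^ i)).comp
        (Polynomial.X - Polynomial.C w)
      = (∑ i ∈ Finset.range (k+1), Polynomial.C (c i) * Polynomial.X ^ (p ^ i))
        - Polynomial.C (∑ i ∈ Finset.range (k+1), c i * w ^ (p ^ i)) := by
  have hpow : ∀ m : ℕ, (Polynomial.X - Polynomial.C w) ^ (p ^ m)
      = Polynomial.X ^ (p ^ m) - Polynomial.C (w ^ (p ^ m)) := by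
    intro m
    rw [sub_pow_char_pow, ← Polynomial.C_pow]
  rw [Polynomial.comp, Polynomial.eval₂_finset_sum]
  simp only [Polynomial.eval₂_mul, Polynomial.eval₂_C, Polynomial.eval₂_X_pow, hpow]
  rw [Finset.sum_congr rfl (fun i _ => mul_sub (Polynomial.C (c i))
    (Polynomial.X ^ (p ^ i)) (Polynomial.C (w ^ (p ^ i)))), Finset.sum_sub_distrib]
  congr 1
  rw [map_sum]
  refine Finset.sum_congr rfl fun i _ => ?_
  rw [← Polynomial.C_mul]

lemma f_succ {k : ℕ} (hk' : k < n)
    (hrep : f p n k = ∑ i ∈ Finset.range (k+1),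
      Polynomial.C ((f p n k).coeff (p ^ i)) * Polynomial.X ^ (p ^ i)) :
    f p n (k+1) = (f p n k) ^ p
      - Polynomial.C (((f p n k).eval (X (⟨k, hk'⟩ : Fin n))) ^ (p - 1)) * f p n k := by
  classical
  set e : MvPolynomial (Fin n) (ZMod p) := (f p n k).eval (X (⟨k, hk'⟩ : Fin n)) with he
  have hcomp : ∀ w : MvPolynomial (Fin n) (ZMod p),
      (f p n k).comp (Polynomial.X - Polynomial.C w)
        = f p n k - Polynomial.C ((f p n k).eval w) := by
    intro w
    conv_lhs => rw [hrep]
    rw [comp_aux p (fun i => (f p n k).coeff (p ^ i)) k w,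
      ← eval_aux p (fun i => (f p n k).coeff (p ^ i)) k w, ← hrep]
  have heval2 : ∀ a : ZMod p, (f p n k).eval (C a * X (⟨k, hk'⟩ : Fin n)) = C a * e := by
    intro a
    rw [he]
    conv_lhs => rw [hrep]
    conv_rhs => rw [hrep]
    rw [eval_aux, eval_aux, Finset.mul_sum]
    refine Finset.sum_congr rfl fun i _ => ?_
    rw [mul_pow, ← MvPolynomial.C_pow, ZMod.pow_card_pow]
    ring
  have hprod : f p n (k+1) = ∏ a : ZMod p,
      ((f p n k).comp (Polynomial.X - Polynomial.C (C a * X (⟨k, hk'⟩ : Fin n)))) := by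
    rw [f, V_succ p n hk',
      Finset.prod_image (fun x hx y hy h =>
        V_succ_injOn p n hk' (Finset.mem_coe.mpr hx) (Finset.mem_coe.mpr hy) h),
      Finset.prod_product]
    refine Finset.prod_congr rfl fun a _ => ?_
    rw [f, Polynomial.prod_comp]
    refine Finset.prod_congr rfl fun u _ => ?_
    simp only [Polynomial.sub_comp, Polynomial.X_comp, Polynomial.C_comp, map_add]
    ring
  rw [hprod]
  have hstep : ∀ a : ZMod p,
      (f p n k).comp (Polynomial.X - Polynomial.C (C a * X (⟨k, hk'⟩ : Fin n)))
        = f p n k - Polynomial.C (algebraMap (ZMod p) (MvPolynomial (Fin n) (ZMod p)) a * e) := by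
    intro a
    rw [hcomp, heval2, MvPolynomial.algebraMap_eq]
  rw [Finset.prod_congr rfl fun a _ => hstep a]
  have hHcomp : ∏ a : ZMod p,
      (f p n k - Polynomial.C (algebraMap (ZMod p) (MvPolynomial (Fin n) (ZMod p)) a * e))
      = (∏ a : ZMod p, (Polynomial.X
          - Polynomial.C (algebraMap (ZMod p) (MvPolynomial (Fin n) (ZMod p)) a * e))).comp
            (f p n k) := by
    rw [Polynomial.prod_comp]
    refine Finset.prod_congr rfl fun a _ => ?_
    rw [Polynomial.sub_comp, Polynomial.X_comp, Polynomial.C_comp]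
  rw [hHcomp, H_eq p e (e_ne_zero p n hk'), Polynomial.sub_comp, Polynomial.pow_comp,
    Polynomial.X_comp, Polynomial.mul_comp, Polynomial.C_comp, Polynomial.X_comp]

lemma coeff_f : ∀ k : ℕ, k ≤ n → ∀ m : ℕ, (∀ i : ℕ, i ≤ k → m ≠ p ^ i) →
    (f p n k).coeff m = 0 := by
  intro k
  induction k with
  | zero =>
    intro _ m hm
    have h1 : f p n 0 = Polynomial.X := by
      rw [f, V_zero]
      simp
    rw [h1, Polynomial.coeff_X, if_neg]
    intro hh
    have := hm 0 (le_refl 0)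
    rw [pow_zero] at this
    omega
  | succ k ih =>
    intro hk m hm
    have hk' : k < n := by omega
    have hrep := rep_lemma p (f p n k) k hp.out.one_lt (ih (by omega))
    rw [f_succ p n hk' hrep, Polynomial.coeff_sub]
    have h1 : ((f p n k) ^ p).coeff m = 0 := by
      conv_lhs => rw [hrep]
      rw [sum_pow_char]
      rw [Polynomial.finset_sum_coeff]
      refine Finset.sum_eq_zero fun i hi => ?_
      rw [mul_pow, ← Polynomial.C_pow, ← pow_mul, Polynomial.coeff_C_mul,
        Polynomial.coeff_X_pow, if_neg, mul_zero]
      rw [← pow_succ]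
      exact hm (i+1) (by simpa [Nat.lt_succ_iff] using Finset.mem_range.mp hi)
    have h2 : (f p n k).coeff m = 0 := ih (by omega) m (fun i hi => hm i (by omega))
    rw [h1, Polynomial.coeff_C_mul, h2, mul_zero, sub_zero]

end Main

/-- Borel generator: `hGen p n j` is `h_{j+1}` of the paper. -/
noncomputable def hGen (p n : ℕ) [Fact p.Prime] (j : Fin n) : MvPolynomial (Fin n) (ZMod p) :=
  (Polynomial.eval (X j) (f p n j.val)) ^ (p - 1)

/-- Action of `GL_n(𝔽_p)` on `S` by linear substitution `g · y_j = ∑_i g_{ij} y_i`. -/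
noncomputable def gact (p n : ℕ) [Fact p.Prime] (g : GL (Fin n) (ZMod p)) :
    MvPolynomial (Fin n) (ZMod p) →ₐ[ZMod p] MvPolynomial (Fin n) (ZMod p) :=
  aeval (fun j : Fin n => ∑ i : Fin n, C ((g : Matrix (Fin n) (Fin n) (ZMod p)) i j) * X i)

/-- `f_k` is monic of degree `p^k`, its only possibly-nonzero coefficients sit
in degrees `p^i` for `0 ≤ i ≤ k`, and `f_k = ∑_{i=0}^k (-1)^{k-i} C(d_{k,i}) X^{p^i}` with
`d_{k,k} = 1`. -/
theorem stmt0 (p n : ℕ) [Fact p.Prime] (k : ℕ) (hk : k ≤ n) :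
    (f p n k).Monic ∧ (f p n k).natDegree = p ^ k ∧
    (∀ m : ℕ, (¬ ∃ i, i ≤ k ∧ m = p ^ i) → (f p n k).coeff m = 0) ∧
    f p n k = ∑ i ∈ Finset.range (k + 1),
      (-1) ^ (k - i) * Polynomial.C (d p n k i) * Polynomial.X ^ (p ^ i) ∧
    d p n k k = 1 := by
  have hmonic := monic_f p n k
  have hdeg := natDegree_f p n hk
  have hcoeff : ∀ m : ℕ, (¬ ∃ i, i ≤ k ∧ m = p ^ i) → (f p n k).coeff m = 0 := by
    intro m hm
    push_neg at hm
    exact coeff_f p n k hk m hm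
  have hrep := rep_lemma p (f p n k) k (Fact.out (p := p.Prime)).one_lt (coeff_f p n k hk)
  refine ⟨hmonic, hdeg, hcoeff, ?_, ?_⟩
  · conv_lhs => rw [hrep]
    refine Finset.sum_congr rfl fun i _ => ?_
    have hC : Polynomial.C (d p n k i)
        = (-1) ^ (k - i) * Polynomial.C ((f p n k).coeff (p ^ i)) := by
      rw [d, map_mul, map_pow, map_neg, map_one]
    rw [hC, ← mul_assoc, ← mul_pow]
    norm_num
  · rw [d, Nat.sub_self, pow_zero, one_mul, ← hdeg]
    exact hmonic.coeff_natDegree
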